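/- Let k be a field (of arbitrary characteristic), let R be a k-algebra, and let M and N be semisimple R-modules finite-dimensional over k with dim_k M = dim_k N. Suppose that for every n ≥ 1 and every tuple r₁, …, rₙ ∈ R, the determinant of X₁·ρ_M(r₁) + ⋯ + Xₙ·ρ_M(rₙ) on M ⊗_k k[X₁,…,Xₙ] equals the determinant of X₁·ρ_N(r₁) + ⋯ + Xₙ·ρ_N(rₙ) on N ⊗_k k[X₁,…,Xₙ]. Then M and N are isomorphic as R-modules. -/

import Mathlib

open scoped TensorProduct

/-- The determinant of `X₁·ρ_M(r₁) + ⋯ + Xₙ·ρ_M(rₙ)`, an endomorphism of the finite free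
`k[X₁,…,Xₙ]`-module `k[X₁,…,Xₙ] ⊗[k] M`, where `ρ_M(r)` denotes the base change to
`k[X₁,…,Xₙ]` of the `k`-linear action map `m ↦ r • m` of `M`. -/
noncomputable def detOfSMulPoly (k : Type*) {R : Type*} (M : Type*) {n : ℕ} [Field k] [Ring R]
    [Algebra k R] [AddCommGroup M] [Module k M] [Module R M] [IsScalarTower k R M]
    (r : Fin n → R) : MvPolynomial (Fin n) k :=
  LinearMap.det ((∑ i : Fin n, (MvPolynomial.X i : MvPolynomial (Fin n) k) •
      LinearMap.baseChange (MvPolynomial (Fin n) k) (DistribMulAction.toLinearMap k M (r i)) :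
    MvPolynomial (Fin n) k ⊗[k] M →ₗ[MvPolynomial (Fin n) k] MvPolynomial (Fin n) k ⊗[k] M))

section Aux

open Module LinearMap MvPolynomial

variable {k R : Type*} [Field k] [Ring R] [Algebra k R]

section Bridge

variable {M : Type*} [AddCommGroup M] [Module k M] [Module R M] [IsScalarTower k R M]

set_option synthInstance.maxHeartbeats 1000000 in
/-- Matrix formula for `detOfSMulPoly`. -/
lemma detOfSMulPoly_eq_det {n : ℕ} {ι : Type*} [Fintype ι] [DecidableEq ι]
    (b : Basis ι k M) (r : Fin n → R) :
    detOfSMulPoly k M r = (∑ i : Fin n, (MvPolynomial.X i : MvPolynomial (Fin n) k) •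
      ((LinearMap.toMatrix b b (DistribMulAction.toLinearMap k M (r i))).map
        (algebraMap k (MvPolynomial (Fin n) k)))).det := by
  rw [detOfSMulPoly,
    ← LinearMap.det_toMatrix (Algebra.TensorProduct.basis (MvPolynomial (Fin n) k) b)]
  congr 1
  rw [map_sum]
  refine Finset.sum_congr rfl fun i _ => ?_
  rw [LinearEquiv.map_smul, LinearMap.toMatrix_baseChange]

/-- Evaluation formula for `detOfSMulPoly`. -/
lemma aeval_detOfSMulPoly {n : ℕ} {ι : Type*} [Fintype ι] [DecidableEq ι]
    {B : Type*} [CommRing B] [Algebra k B]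
    (b : Basis ι k M) (r : Fin n → R) (v : Fin n → B) :
    MvPolynomial.aeval v (detOfSMulPoly k M r) =
      (∑ i : Fin n, v i •
        ((LinearMap.toMatrix b b (DistribMulAction.toLinearMap k M (r i))).map
          (algebraMap k B))).det := by
  rw [detOfSMulPoly_eq_det b r]
  have := RingHom.map_det ((MvPolynomial.aeval v : MvPolynomial (Fin n) k →ₐ[k] B) : _ →+* B)
    (∑ i : Fin n, (MvPolynomial.X i : MvPolynomial (Fin n) k) •
      ((LinearMap.toMatrix b b (DistribMulAction.toLinearMap k M (r i))).map
        (algebraMap k (MvPolynomial (Fin n) k))))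
  rw [show ((MvPolynomial.aeval v : MvPolynomial (Fin n) k →ₐ[k] B) : _ →+* B)
      (∑ i : Fin n, (MvPolynomial.X i : MvPolynomial (Fin n) k) •
        ((LinearMap.toMatrix b b (DistribMulAction.toLinearMap k M (r i))).map
          (algebraMap k (MvPolynomial (Fin n) k)))).det
      = MvPolynomial.aeval v (∑ i : Fin n, (MvPolynomial.X i : MvPolynomial (Fin n) k) •
        ((LinearMap.toMatrix b b (DistribMulAction.toLinearMap k M (r i))).map
          (algebraMap k (MvPolynomial (Fin n) k)))).det from rfl] at this
  rw [this]
  congr 1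
  ext a c
  simp [Matrix.sum_apply, Matrix.smul_apply, Matrix.map_apply, smul_eq_mul, map_sum,
    MvPolynomial.algebraMap_eq]

end Bridge

section Congr

variable {M N : Type*} [AddCommGroup M] [Module k M] [Module R M] [IsScalarTower k R M]
  [AddCommGroup N] [Module k N] [Module R N] [IsScalarTower k R N]

/-- `detOfSMulPoly` is invariant under `R`-linear isomorphism. -/
lemma detOfSMulPoly_congr [FiniteDimensional k M] (e : M ≃ₗ[R] N) {n : ℕ} (r : Fin n → R) :
    detOfSMulPoly k M r = detOfSMulPoly k N r := by
  classical
  let b := Module.finBasis k M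
  let b' := b.map (e.restrictScalars k)
  rw [detOfSMulPoly_eq_det b, detOfSMulPoly_eq_det b']
  congr 1
  refine Finset.sum_congr rfl fun i _ => ?_
  have hmat : LinearMap.toMatrix b b (DistribMulAction.toLinearMap k M (r i)) =
      LinearMap.toMatrix b' b' (DistribMulAction.toLinearMap k N (r i)) := by
    ext a c
    rw [LinearMap.toMatrix_apply, LinearMap.toMatrix_apply, Basis.map_apply, Basis.map_repr]
    simp only [DistribMulAction.toLinearMap, DistribSMul.toLinearMap_apply, LinearEquiv.trans_apply,
      LinearEquiv.restrictScalars_apply, LinearEquiv.restrictScalars_symm_apply]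
    rw [show r i • e (b c) = e (r i • b c) from (map_smul e (r i) (b c)).symm,
      e.symm_apply_apply]
  rw [hmat]

/-- `detOfSMulPoly` of a product is the product of `detOfSMulPoly`s. -/
lemma detOfSMulPoly_prod [FiniteDimensional k M] [FiniteDimensional k N] {n : ℕ}
    (r : Fin n → R) :
    detOfSMulPoly k (M × N) r = detOfSMulPoly k M r * detOfSMulPoly k N r := by
  classical
  let b := Module.finBasis k M
  let c := Module.finBasis k N
  rw [detOfSMulPoly_eq_det (b.prod c), detOfSMulPoly_eq_det b, detOfSMulPoly_eq_det c]
  have hprod : ∀ s : R, DistribMulAction.toLinearMap k (M × N) s =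
      LinearMap.prodMap (DistribMulAction.toLinearMap k M s)
        (DistribMulAction.toLinearMap k N s) := fun s => rfl
  have : (∑ i : Fin n, (MvPolynomial.X i : MvPolynomial (Fin n) k) •
      ((LinearMap.toMatrix (b.prod c) (b.prod c)
        (DistribMulAction.toLinearMap k (M × N) (r i))).map
          (algebraMap k (MvPolynomial (Fin n) k)))) =
      Matrix.fromBlocks
        (∑ i : Fin n, (MvPolynomial.X i : MvPolynomial (Fin n) k) •
          ((LinearMap.toMatrix b b (DistribMulAction.toLinearMap k M (r i))).map
            (algebraMap k (MvPolynomial (Fin n) k)))) 0 0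
        (∑ i : Fin n, (MvPolynomial.X i : MvPolynomial (Fin n) k) •
          ((LinearMap.toMatrix c c (DistribMulAction.toLinearMap k N (r i))).map
            (algebraMap k (MvPolynomial (Fin n) k)))) := by
    simp only [hprod, LinearMap.toMatrix_prodMap]
    ext (a|a) (d|d) <;>
      simp [Matrix.sum_apply, Matrix.smul_apply, Matrix.map_apply, smul_eq_mul]
  rw [this, Matrix.det_fromBlocks_zero₂₁]

end Congr

section Semisimple

/-- Finite powers of semisimple modules are semisimple. -/
lemma isSemisimpleModule_pi {W : Type*} [AddCommGroup W] [Module R W]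
    [IsSemisimpleModule R W] (ι : Type*) [Finite ι] : IsSemisimpleModule R (ι → W) := by
  classical
  refine isSemisimpleModule_of_isSemisimpleModule_submodule'
    (p := fun i : ι => LinearMap.range (LinearMap.single R (fun _ : ι => W) i)) (fun i => ?_)
    (LinearMap.iSup_range_single R _)
  exact IsSemisimpleModule.congr
    (LinearEquiv.ofInjective _ (fun _ _ h => Pi.single_injective (M := fun _ : ι => W) i h)).symm

/-- If the annihilator of a f.d. semisimple module `W` is contained in a maximal left ideal
`m`, then there is a nonzero map `R ⧸ m → W`. -/
lemma exists_hom_ne_zero {W : Type*} [AddCommGroup W] [Module k W] [Module R W]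
    [IsScalarTower k R W] [FiniteDimensional k W] [IsSemisimpleModule R W]
    {m : Ideal R} (hm : m.IsMaximal) (hle : Module.annihilator R W ≤ m) :
    ∃ f : (R ⧸ m) →ₗ[R] W, f ≠ 0 := by
  classical
  let bW := Module.finBasis k W
  let φ : R →ₗ[R] (Fin (Module.finrank k W) → W) :=
    LinearMap.pi fun i => LinearMap.toSpanSingleton R W (bW i)
  have hker : LinearMap.ker φ = Module.annihilator R W := by
    ext x
    simp only [LinearMap.mem_ker, Module.mem_annihilator, funext_iff, LinearMap.pi_apply,
      LinearMap.toSpanSingleton_apply, Pi.zero_apply, φ]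
    constructor
    · intro hx w
      have hzero : DistribMulAction.toLinearMap k W x = 0 := bW.ext fun i => by
        simpa [DistribMulAction.toLinearMap] using hx i
      simpa [DistribMulAction.toLinearMap] using LinearMap.congr_fun hzero w
    · intro hx i; exact hx _
  have hKm : LinearMap.ker φ ≤ m := hker ▸ hle
  haveI : IsSemisimpleModule R (Fin (Module.finrank k W) → W) := isSemisimpleModule_pi _
  -- surjection from `range φ` onto `R ⧸ m`
  let π : (R ⧸ LinearMap.ker φ) →ₗ[R] (R ⧸ m) :=
    Submodule.mapQ _ m LinearMap.id (by simpa using hKm)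
  have hπ : Function.Surjective π := by
    intro y
    obtain ⟨x, rfl⟩ := Submodule.Quotient.mk_surjective m y
    exact ⟨Submodule.Quotient.mk x, by simp [π, Submodule.mapQ_apply]⟩
  let θ : (LinearMap.range φ) →ₗ[R] (R ⧸ m) :=
    π ∘ₗ (φ.quotKerEquivRange.symm : LinearMap.range φ →ₗ[R] R ⧸ LinearMap.ker φ)
  have hθ : Function.Surjective θ := by
    intro y
    obtain ⟨x, hx⟩ := hπ y
    exact ⟨φ.quotKerEquivRange x, by simp [θ, hx]⟩
  obtain ⟨C, hC⟩ := exists_isCompl (LinearMap.ker θ)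
  let α : ((LinearMap.range φ) ⧸ LinearMap.ker θ) ≃ₗ[R] C :=
    Submodule.quotientEquivOfIsCompl _ _ hC
  let β : ((LinearMap.range φ) ⧸ LinearMap.ker θ) ≃ₗ[R] (R ⧸ m) :=
    θ.quotKerEquivOfSurjective hθ
  haveI : Nontrivial (R ⧸ m) :=
    Submodule.Quotient.nontrivial_iff.mpr hm.ne_top
  let g : (R ⧸ m) →ₗ[R] (Fin (Module.finrank k W) → W) :=
    ((LinearMap.range φ).subtype).comp
      ((C.subtype).comp ((α.toLinearMap).comp β.symm.toLinearMap))
  have hginj : Function.Injective g := by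
    have hg : ⇑g = ⇑(LinearMap.range φ).subtype ∘ ⇑C.subtype ∘ ⇑α ∘ ⇑β.symm := rfl
    rw [hg]
    exact (Submodule.injective_subtype _).comp ((Submodule.injective_subtype _).comp
      (α.injective.comp β.symm.injective))
  obtain ⟨y, hy⟩ := exists_ne (0 : R ⧸ m)
  have hgy : g y ≠ 0 := fun hz => hy (hginj (by simpa using hz))
  obtain ⟨i, hi⟩ : ∃ i, g y i ≠ 0 := by
    by_contra hcon
    push_neg at hcon
    exact hgy (funext hcon)
  exact ⟨(LinearMap.proj i) ∘ₗ g, fun hz => hi (by simpa using LinearMap.congr_fun hz y)⟩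

/-- Key algebraic lemma: if there is no nonzero hom from the simple module `S` to the
semisimple module `N`, then the two annihilators generate the unit ideal. -/
lemma annihilator_sup_annihilator_eq_top {S N : Type*}
    [AddCommGroup S] [Module k S] [Module R S] [IsScalarTower k R S] [FiniteDimensional k S]
    [IsSimpleModule R S]
    [AddCommGroup N] [Module k N] [Module R N] [IsScalarTower k R N] [FiniteDimensional k N]
    [IsSemisimpleModule R N]
    (h0 : ∀ f : S →ₗ[R] N, f = 0) :
    Module.annihilator R S ⊔ Module.annihilator R N = ⊤ := by
  by_contra hne
  obtain ⟨m, hm, hle⟩ := Ideal.exists_le_maximal _ hne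
  obtain ⟨f₁, hf₁⟩ := exists_hom_ne_zero (k := k) (W := S) hm (le_trans le_sup_left hle)
  obtain ⟨f₂, hf₂⟩ := exists_hom_ne_zero (k := k) (W := N) hm (le_trans le_sup_right hle)
  haveI : IsSimpleModule R (R ⧸ m) := isSimpleModule_iff_isCoatom.mpr hm.out
  have hbij : Function.Bijective f₁ := LinearMap.bijective_of_ne_zero hf₁
  let e₁ : (R ⧸ m) ≃ₗ[R] S := LinearEquiv.ofBijective f₁ hbij
  have : f₂ ∘ₗ (e₁.symm : S →ₗ[R] R ⧸ m) = 0 := h0 _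
  obtain ⟨x, hx⟩ := DFunLike.ne_iff.mp hf₂
  exact hx (by simpa using LinearMap.congr_fun this (e₁ x))

end Semisimple

section Snoc

variable {M : Type*} [AddCommGroup M] [Module k M] [Module R M] [IsScalarTower k R M]
  [FiniteDimensional k M]

/-- Appending the tuple by `1 ∈ R` makes the determinant polynomial nonzero. -/
lemma detOfSMulPoly_snoc_one_ne_zero {n : ℕ} (r : Fin n → R) :
    detOfSMulPoly k M (Fin.snoc r (1 : R)) ≠ 0 := by
  classical
  intro h0
  have h1 := aeval_detOfSMulPoly (B := k) (Module.finBasis k M) (Fin.snoc r (1 : R))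
    (Fin.snoc (0 : Fin n → k) 1)
  rw [h0, map_zero] at h1
  have hid : DistribMulAction.toLinearMap k M (1 : R) = LinearMap.id := by
    ext m; simp [DistribMulAction.toLinearMap]
  rw [Fin.sum_univ_castSucc] at h1
  simp only [Fin.snoc_castSucc, Pi.zero_apply, zero_smul, Finset.sum_const_zero, zero_add,
    Fin.snoc_last, one_smul, hid, LinearMap.toMatrix_id] at h1
  rw [Matrix.map_one _ (map_zero _) (map_one _), Matrix.det_one] at h1
  exact one_ne_zero h1.symm

/-- Specializing the last variable to `0` recovers the original determinant polynomial. -/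
lemma aeval_snoc_detOfSMulPoly {n : ℕ} (r : Fin n → R) :
    MvPolynomial.aeval (Fin.snoc (MvPolynomial.X : Fin n → MvPolynomial (Fin n) k) 0)
      (detOfSMulPoly k M (Fin.snoc r (1 : R))) = detOfSMulPoly k M r := by
  classical
  rw [aeval_detOfSMulPoly (Module.finBasis k M), detOfSMulPoly_eq_det (Module.finBasis k M)]
  rw [Fin.sum_univ_castSucc]
  simp [Fin.snoc_castSucc, Fin.snoc_last, MvPolynomial.algebraMap_eq]

end Snoc

end Aux

section Main

open Module LinearMap

universe uM uN

variable {k R : Type*} [Field k] [Ring R] [Algebra k R]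

/-- Strong-induction core of the theorem. -/
theorem main_aux_detOfSMulPoly (d : ℕ) :
    ∀ (M : Type uM) (N : Type uN) [AddCommGroup M] [Module k M] [Module R M]
      [IsScalarTower k R M] [FiniteDimensional k M] [AddCommGroup N] [Module k N] [Module R N]
      [IsScalarTower k R N] [FiniteDimensional k N] [IsSemisimpleModule R M]
      [IsSemisimpleModule R N], Module.finrank k M = d → Module.finrank k N = d →
      (∀ (n : ℕ), 1 ≤ n → ∀ r : Fin n → R, detOfSMulPoly k M r = detOfSMulPoly k N r) →
      Nonempty (M ≃ₗ[R] N) := by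
  induction d using Nat.strong_induction_on with
  | _ d ih =>
  intro M N _ _ _ _ _ _ _ _ _ _ _ _ hM hN h
  rcases Nat.eq_zero_or_pos d with hd | hd
  · subst hd
    haveI : Subsingleton M := Module.finrank_zero_iff.mp hM
    haveI : Subsingleton N := Module.finrank_zero_iff.mp hN
    exact ⟨{ toFun := fun _ => 0, invFun := fun _ => 0,
             map_add' := fun _ _ => Subsingleton.elim _ _,
             map_smul' := fun _ _ => Subsingleton.elim _ _,
             left_inv := fun _ => Subsingleton.elim _ _,
             right_inv := fun _ => Subsingleton.elim _ _ }⟩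
  · haveI : Nontrivial M := Module.finrank_pos_iff.mp (hM ▸ hd)
    obtain ⟨S, hS⟩ := IsSemisimpleModule.exists_simple_submodule R M
    haveI := hS
    haveI : FiniteDimensional k ↥S :=
      FiniteDimensional.of_injective (S.subtype.restrictScalars k) S.injective_subtype
    obtain ⟨M', hMc⟩ := exists_isCompl S
    haveI : FiniteDimensional k ↥M' :=
      FiniteDimensional.of_injective (M'.subtype.restrictScalars k) M'.injective_subtype
    let eM : (↥S × ↥M') ≃ₗ[R] M := Submodule.prodEquivOfIsCompl S M' hMc
    haveI : Nontrivial ↥S := IsSimpleModule.nontrivial R ↥S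
    have hdS : 0 < finrank k ↥S := Module.finrank_pos
    -- Step 1: there is a nonzero `R`-linear map `S → N`.
    have hhom : ∃ f : ↥S →ₗ[R] N, f ≠ 0 := by
      by_contra hno
      push_neg at hno
      have h0 : ∀ f : ↥S →ₗ[R] N, f = 0 := fun f => by
        by_contra hf; exact hf (hno f)
      have htop := annihilator_sup_annihilator_eq_top (k := k) (S := ↥S) (N := N) h0
      have h1 : (1 : R) ∈ Module.annihilator R ↥S ⊔ Module.annihilator R N :=
        htop ▸ Submodule.mem_top
      obtain ⟨y, hy, z, hz, hyz⟩ := Submodule.mem_sup.mp h1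
      have hzS : DistribMulAction.toLinearMap k ↥S z = LinearMap.id := by
        ext s
        have hys : y • s = (0 : ↥S) := Module.mem_annihilator.mp hy s
        have hzs : (y + z) • s = s := by rw [hyz, one_smul]
        rw [add_smul, hys, zero_add] at hzs
        simpa [DistribMulAction.toLinearMap] using congrArg Subtype.val hzs
      have hzN : DistribMulAction.toLinearMap k N z = 0 := by
        ext x
        simpa [DistribMulAction.toLinearMap] using Module.mem_annihilator.mp hz x
      have honeS : DistribMulAction.toLinearMap k ↥S (1 : R) = LinearMap.id := by
        ext w; simp [DistribMulAction.toLinearMap]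
      have honeN : DistribMulAction.toLinearMap k N (1 : R) = LinearMap.id := by
        ext w; simp [DistribMulAction.toLinearMap]
      have key := h 2 one_le_two ![z, 1]
      have keyv := congrArg (MvPolynomial.aeval
        (![-(Polynomial.X : Polynomial k), Polynomial.X])) key
      have hL : MvPolynomial.aeval (![-(Polynomial.X : Polynomial k), Polynomial.X])
          (detOfSMulPoly k M ![z, 1]) = 0 := by
        rw [← detOfSMulPoly_congr eM, detOfSMulPoly_prod, map_mul]
        have h1S : MvPolynomial.aeval (![-(Polynomial.X : Polynomial k), Polynomial.X])
            (detOfSMulPoly k ↥S ![z, 1]) = 0 := by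
          rw [aeval_detOfSMulPoly (Module.finBasis k ↥S)]
          rw [Fin.sum_univ_two]
          simp only [Matrix.cons_val_zero, Matrix.cons_val_one, Matrix.head_cons, hzS,
            honeS, LinearMap.toMatrix_id,
            Matrix.map_one (⇑(algebraMap k (Polynomial k))) (map_zero _) (map_one _)]
          rw [← add_smul, neg_add_cancel, zero_smul]
          haveI : Nonempty (Fin (finrank k ↥S)) := Fin.pos_iff_nonempty.mp (by simpa using hdS)
          exact Matrix.det_zero
        rw [h1S, zero_mul]
      have hR : MvPolynomial.aeval (![-(Polynomial.X : Polynomial k), Polynomial.X])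
          (detOfSMulPoly k N ![z, 1]) = (Polynomial.X : Polynomial k) ^ finrank k N := by
        rw [aeval_detOfSMulPoly (Module.finBasis k N)]
        rw [Fin.sum_univ_two]
        simp only [Matrix.cons_val_zero, Matrix.cons_val_one, Matrix.head_cons, hzN,
          honeN, LinearMap.toMatrix_id, map_zero, Matrix.map_zero _ (map_zero _),
          Matrix.map_one (⇑(algebraMap k (Polynomial k))) (map_zero _) (map_one _),
          smul_zero, zero_add]
        rw [Matrix.det_smul, Matrix.det_one, mul_one, Fintype.card_fin]
      rw [hL, hR] at keyv
      exact pow_ne_zero _ Polynomial.X_ne_zero keyv.symm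
    -- Step 2: split off the simple piece on both sides.
    obtain ⟨f, hf⟩ := hhom
    have hinj := LinearMap.injective_of_ne_zero hf
    let e₂ : ↥S ≃ₗ[R] ↥(LinearMap.range f) := LinearEquiv.ofInjective f hinj
    haveI : IsSimpleModule R ↥(LinearMap.range f) := IsSimpleModule.congr e₂.symm
    haveI : FiniteDimensional k ↥(LinearMap.range f) :=
      FiniteDimensional.of_injective ((LinearMap.range f).subtype.restrictScalars k)
        (LinearMap.range f).injective_subtype
    obtain ⟨N', hNc⟩ := exists_isCompl (LinearMap.range f)
    haveI : FiniteDimensional k ↥N' :=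
      FiniteDimensional.of_injective (N'.subtype.restrictScalars k) N'.injective_subtype
    let eN : (↥(LinearMap.range f) × ↥N') ≃ₗ[R] N :=
      Submodule.prodEquivOfIsCompl _ N' hNc
    have hSf : finrank k ↥(LinearMap.range f) = finrank k ↥S :=
      (LinearEquiv.finrank_eq (e₂.restrictScalars k)).symm
    have hMsum : finrank k ↥S + finrank k ↥M' = d := by
      have := LinearEquiv.finrank_eq (eM.restrictScalars k)
      rw [Module.finrank_prod] at this
      omega
    have hNsum : finrank k ↥(LinearMap.range f) + finrank k ↥N' = d := by
      have := LinearEquiv.finrank_eq (eN.restrictScalars k)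
      rw [Module.finrank_prod] at this
      omega
    -- Step 3: the determinant hypothesis descends to the complements.
    have h' : ∀ (n : ℕ), 1 ≤ n → ∀ r : Fin n → R,
        detOfSMulPoly k ↥M' r = detOfSMulPoly k ↥N' r := by
      intro n hn r
      have hkey := h (n + 1) (by omega) (Fin.snoc r (1 : R))
      have hMeq : detOfSMulPoly k M (Fin.snoc r (1 : R)) =
          detOfSMulPoly k ↥S (Fin.snoc r (1 : R)) *
            detOfSMulPoly k ↥M' (Fin.snoc r (1 : R)) := by
        rw [← detOfSMulPoly_congr eM, detOfSMulPoly_prod]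
      have hNeq : detOfSMulPoly k N (Fin.snoc r (1 : R)) =
          detOfSMulPoly k ↥S (Fin.snoc r (1 : R)) *
            detOfSMulPoly k ↥N' (Fin.snoc r (1 : R)) := by
        rw [← detOfSMulPoly_congr eN, detOfSMulPoly_prod, ← detOfSMulPoly_congr e₂]
      have hprod : detOfSMulPoly k ↥S (Fin.snoc r (1 : R)) *
          detOfSMulPoly k ↥M' (Fin.snoc r (1 : R)) =
          detOfSMulPoly k ↥S (Fin.snoc r (1 : R)) *
            detOfSMulPoly k ↥N' (Fin.snoc r (1 : R)) := by
        rw [← hMeq, ← hNeq]; exact hkey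
      have hcancel := mul_left_cancel₀
        (detOfSMulPoly_snoc_one_ne_zero (k := k) (M := ↥S) r) hprod
      calc detOfSMulPoly k ↥M' r
          = MvPolynomial.aeval (Fin.snoc (MvPolynomial.X : Fin n → MvPolynomial (Fin n) k) 0)
            (detOfSMulPoly k ↥M' (Fin.snoc r (1 : R))) := (aeval_snoc_detOfSMulPoly r).symm
        _ = MvPolynomial.aeval (Fin.snoc (MvPolynomial.X : Fin n → MvPolynomial (Fin n) k) 0)
            (detOfSMulPoly k ↥N' (Fin.snoc r (1 : R))) := by rw [hcancel]
        _ = detOfSMulPoly k ↥N' r := aeval_snoc_detOfSMulPoly r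
    obtain ⟨g⟩ := ih (finrank k ↥M') (by omega) ↥M' ↥N' rfl (by omega) h'
    exact ⟨eM.symm.trans ((e₂.prodCongr g).trans eN)⟩

end Main

/-- Two semisimple `R`-modules of the same finite `k`-dimension with equal
determinant polynomial laws are isomorphic. -/
theorem linearEquiv_of_det_eq_of_isSemisimple (k R M N : Type*) [Field k] [Ring R] [Algebra k R]
    [AddCommGroup M] [Module k M] [Module R M] [IsScalarTower k R M] [FiniteDimensional k M]
    [AddCommGroup N] [Module k N] [Module R N] [IsScalarTower k R N] [FiniteDimensional k N]
    [IsSemisimpleModule R M] [IsSemisimpleModule R N]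
    (hdim : Module.finrank k M = Module.finrank k N)
    (h : ∀ (n : ℕ), 1 ≤ n → ∀ r : Fin n → R, detOfSMulPoly k M r = detOfSMulPoly k N r) :
    Nonempty (M ≃ₗ[R] N) := by
  exact main_aux_detOfSMulPoly (Module.finrank k M) M N rfl hdim.symm h
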